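/- Let x : ℝ → ℝ³ be twice continuously differentiable with ‖x(t)‖ = 1 for all t ∈ ℝ, and let e ∈ ℝ³ with ‖e‖ = 1. Suppose λ := inf_{t∈ℝ} ⟨x(t), e⟩ > 0 and r₂ := sup_{t∈ℝ} ‖ẍ(t) + ‖ẋ(t)‖²·x(t)‖ < ∞. Then sup_{t∈ℝ} ‖ẋ(t)‖² ≤ (C²/λ)·(sup_{t∈ℝ} √(1 − ⟨e, x(t)⟩²))·r₂ ≤ (C²·√(1 − λ²)/λ)·r₂, where C = 2·cos(π/9) is the positive root of ζ³ − 3ζ − 1 = 0. -/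

import Mathlib

open RealInnerProductSpace

lemma sqrt_add_sq_le (a ε : ℝ) (ha : 0 ≤ a) (hε : 0 ≤ ε) :
    Real.sqrt (a + ε^2) ≤ Real.sqrt a + ε := by
  have h1 : Real.sqrt a ^ 2 = a := Real.sq_sqrt ha
  have h2 : 0 ≤ Real.sqrt a := Real.sqrt_nonneg a
  have : a + ε^2 ≤ (Real.sqrt a + ε)^2 := by nlinarith
  calc Real.sqrt (a + ε^2) ≤ Real.sqrt ((Real.sqrt a + ε)^2) := Real.sqrt_le_sqrt this
    _ = Real.sqrt a + ε := by rw [Real.sqrt_sq (by positivity)]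

lemma taylor2 {f f' f'' : ℝ → ℝ} (hf : ∀ t, HasDerivAt f (f' t) t)
    (hf' : ∀ t, HasDerivAt f' (f'' t) t) (hcont : Continuous f'') (c T : ℝ) :
    ∫ s in (0:ℝ)..T, (T - s) * f'' (c + s) = f (c + T) - f c - T * f' c := by
  have hG : ∀ s : ℝ, HasDerivAt (fun s => f (c + s) + (T - s) * f' (c + s))
      ((T - s) * f'' (c + s)) s := by
    intro s
    have h1 : HasDerivAt (fun s : ℝ => f (c + s)) (f' (c + s)) s := by
      simpa [Function.comp_def] using (hf (c + s)).comp s ((hasDerivAt_id s).const_add c)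
    have h2 : HasDerivAt (fun s : ℝ => f' (c + s)) (f'' (c + s)) s := by
      simpa [Function.comp_def] using (hf' (c + s)).comp s ((hasDerivAt_id s).const_add c)
    have h3 : HasDerivAt (fun s : ℝ => (T - s)) (-1) s := by
      simpa using (hasDerivAt_id s).const_sub T
    have := h1.add (h3.mul h2)
    exact this.congr_deriv (by ring)
  have hint : IntervalIntegrable (fun s => (T - s) * f'' (c + s)) MeasureTheory.volume 0 T := by
    apply Continuous.intervalIntegrable
    continuity
  rw [intervalIntegral.integral_eq_sub_of_hasDerivAt (fun s _ => hG s) hint]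
  ring

lemma poly_integral (T A B C D : ℝ) :
    ∫ s in (0:ℝ)..T, (A + B*s + C*s^2 + D*s^3)
      = A*T + B*T^2/2 + C*T^3/3 + D*T^4/4 := by
  have hG : ∀ s : ℝ, HasDerivAt (fun s => A*s + B*s^2/2 + C*s^3/3 + D*s^4/4)
      (A + B*s + C*s^2 + D*s^3) s := by
    intro s
    have h1 := hasDerivAt_id s
    have h2 := hasDerivAt_pow 2 s
    have h3 := hasDerivAt_pow 3 s
    have h4 := hasDerivAt_pow 4 s
    have := ((h1.const_mul A).add ((h2.const_mul B).div_const 2)).add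
      (((h3.const_mul C).div_const 3).add ((h4.const_mul D).div_const 4))
    refine (this.congr_deriv (g' := A + B*s + C*s^2 + D*s^3) (by norm_num; ring)).congr_of_eventuallyEq
      (Filter.Eventually.of_forall fun u => ?_)
    simp only [Pi.add_apply, id]; ring
  have hint : IntervalIntegrable (fun s : ℝ => A + B*s + C*s^2 + D*s^3) MeasureTheory.volume 0 T := by
    apply Continuous.intervalIntegrable; continuity
  rw [intervalIntegral.integral_eq_sub_of_hasDerivAt (fun s _ => hG s) hint]
  ring

lemma weight_integral (T a b L M : ℝ) :
    ∫ s in (0:ℝ)..T, (T - s) * (M - L * (a + b * (T - s))^2)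
      = M*T^2/2 - L*(a^2*T^2/2 + 2*a*b*T^3/3 + b^2*T^4/4) := by
  have h := intervalIntegral.integral_comp_sub_left
      (a := 0) (b := T) (fun u => u * (M - L * (a + b * u)^2)) T
  simp only [sub_zero, sub_self] at h
  rw [h]
  have h2 : (fun u : ℝ => u * (M - L*(a+b*u)^2))
      = fun u => 0 + (M - L*a^2)*u + (-(2*L*a*b))*u^2 + (-(L*b^2))*u^3 := by
    funext u; ring
  rw [h2, poly_integral]
  ring

lemma cos_pi_div_nine_cubic :
    (2 * Real.cos (Real.pi / 9))^3 = 3 * (2 * Real.cos (Real.pi / 9)) + 1 := by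
  have h3 : Real.cos (3 * (Real.pi / 9)) = 4 * Real.cos (Real.pi / 9) ^ 3 - 3 * Real.cos (Real.pi / 9) :=
    Real.cos_three_mul _
  have h9 : (3 : ℝ) * (Real.pi / 9) = Real.pi / 3 := by ring
  rw [h9, Real.cos_pi_div_three] at h3
  nlinarith [h3]

lemma sqrt3_le_C : Real.sqrt 3 ≤ 2 * Real.cos (Real.pi / 9) := by
  have h1 : Real.cos (Real.pi / 6) ≤ Real.cos (Real.pi / 9) := by
    have hpi : 0 < Real.pi := Real.pi_pos
    have := Real.strictAntiOn_cos (a := Real.pi / 9) (b := Real.pi / 6)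
      ⟨by positivity, by linarith⟩ ⟨by positivity, by linarith⟩ (by linarith)
    linarith
  rw [Real.cos_pi_div_six] at h1
  linarith

lemma quad_bound (lam P X : ℝ) (hl : 0 < lam) (hl1 : lam ≤ 1) (hP : 0 ≤ P) (hX : 0 ≤ X)
    (h : lam * X^2 ≤ 2*P*X + 4*P^2) :
    X ≤ (2 * Real.cos (Real.pi / 9))^2 / lam * P := by
  set c := 2 * Real.cos (Real.pi / 9) with hc
  have hcube : c^3 = 3*c + 1 := cos_pi_div_nine_cubic
  have hs3 : Real.sqrt 3 ≤ c := sqrt3_le_C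
  have h3 : (Real.sqrt 3)^2 = 3 := Real.sq_sqrt (by norm_num)
  have hs : (1.7 : ℝ) ≤ Real.sqrt 3 := by
    nlinarith [Real.sqrt_nonneg 3]
  have hcge : (1.7 : ℝ) ≤ c := le_trans hs hs3
  have hkey : 4 ≤ c^4 - 2*c^2 := by nlinarith
  rw [div_mul_eq_mul_div, le_div_iff₀ hl]
  have hY2 : (lam*X)^2 ≤ 2*P*(lam*X) + 4*P^2 := by nlinarith [sq_nonneg P, mul_nonneg hP hX]
  set Y := lam * X with hY
  have hYnn : 0 ≤ Y := mul_nonneg hl.le hX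
  by_contra hcon
  push_neg at hcon
  rw [show X * lam = Y by rw [hY]; ring] at hcon
  rcases eq_or_lt_of_le hP with hP0 | hP0
  · rw [← hP0] at hY2 hcon
    nlinarith [hY2, hcon]
  · have h1 : Y^2 ≤ 2*P*Y + 4*P^2 := hY2
    have h2 : c^2*P < Y := hcon
    nlinarith [mul_pos hP0 (lt_of_le_of_lt (by positivity : (0:ℝ) ≤ c^2*P) h2),
      mul_lt_mul_of_pos_left h2 hP0, sq_nonneg (Y - c^2*P), hkey, hcge, mul_pos hP0 hP0]

set_option maxHeartbeats 1000000 in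
theorem landau_hadamard_sphere (x : ℝ → EuclideanSpace ℝ (Fin 3))
    (hx : ContDiff ℝ 2 x) (hunit : ∀ t : ℝ, ‖x t‖ = 1)
    (e : EuclideanSpace ℝ (Fin 3)) (he : ‖e‖ = 1)
    (lam : ℝ) (hlam : lam = ⨅ t : ℝ, ⟪x t, e⟫) (hlampos : 0 < lam)
    (r₂ : ℝ) (hr₂ : r₂ = ⨆ t : ℝ, ‖deriv (deriv x) t + ‖deriv x t‖ ^ 2 • x t‖)
    (hr₂bdd : BddAbove (Set.range fun t => ‖deriv (deriv x) t + ‖deriv x t‖ ^ 2 • x t‖)) :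
    (∀ t : ℝ, ‖deriv x t‖ ^ 2 ≤
        ((2 * Real.cos (Real.pi / 9)) ^ 2 / lam) *
          (⨆ s : ℝ, Real.sqrt (1 - ⟪e, x s⟫ ^ 2)) * r₂) ∧
      ((2 * Real.cos (Real.pi / 9)) ^ 2 / lam) *
          (⨆ s : ℝ, Real.sqrt (1 - ⟪e, x s⟫ ^ 2)) * r₂ ≤
        ((2 * Real.cos (Real.pi / 9)) ^ 2 * Real.sqrt (1 - lam ^ 2) / lam) * r₂ := by
  have hC2nn : (0:ℝ) ≤ (2 * Real.cos (Real.pi / 9)) ^ 2 / lam := by positivity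
  -- smoothness
  have h2 : ContDiff ℝ (1+1) x := by norm_num at hx ⊢; exact hx
  have hD := contDiff_succ_iff_deriv.mp h2
  have hx1 : Differentiable ℝ x := hD.1
  have hD1 := contDiff_succ_iff_deriv.mp (by simpa using hD.2.2 : ContDiff ℝ (0+1) (deriv x))
  have hx2 : Differentiable ℝ (deriv x) := hD1.1
  have hx''c : Continuous (deriv (deriv x)) := hD1.2.2.continuous
  have hd : ∀ t, HasDerivAt x (deriv x t) t := fun t => (hx1 t).hasDerivAt
  have hd2 : ∀ t, HasDerivAt (deriv x) (deriv (deriv x) t) t := fun t => (hx2 t).hasDerivAt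
  -- basic bounds
  have hinner_le : ∀ t, ⟪e, x t⟫ ≤ 1 := fun t => by
    have := real_inner_le_norm e (x t); rwa [he, hunit, one_mul] at this
  have hbb : BddBelow (Set.range fun t => ⟪x t, e⟫) := by
    refine ⟨-1, ?_⟩; rintro y ⟨t, rfl⟩
    have := abs_real_inner_le_norm (x t) e
    rw [hunit, he, one_mul] at this
    have := neg_abs_le (⟪x t, e⟫ : ℝ)
    linarith
  have hlam_le : ∀ t, lam ≤ ⟪e, x t⟫ := fun t => by
    rw [real_inner_comm, hlam]; exact ciInf_le hbb t
  have hlam1 : lam ≤ 1 := le_trans (hlam_le 0) (hinner_le 0)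
  set S := ⨆ s : ℝ, Real.sqrt (1 - ⟪e, x s⟫^2) with hSdef
  have hSbdd : BddAbove (Set.range fun s => Real.sqrt (1 - ⟪e, x s⟫^2)) := by
    refine ⟨1, ?_⟩; rintro y ⟨t, rfl⟩
    exact Real.sqrt_le_one.mpr (by nlinarith [sq_nonneg (⟪e, x t⟫ : ℝ)])
  have hSge : ∀ t, Real.sqrt (1 - ⟪e, x t⟫^2) ≤ S := fun t => le_ciSup hSbdd t
  have hS0 : (0:ℝ) ≤ S := le_trans (Real.sqrt_nonneg _) (hSge 0)
  have hr₂le : ∀ t, ‖deriv (deriv x) t + ‖deriv x t‖^2 • x t‖ ≤ r₂ := fun t => by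
    rw [hr₂]; exact le_ciSup hr₂bdd t
  have hr₂0 : (0:ℝ) ≤ r₂ := le_trans (norm_nonneg _) (hr₂le 0)
  -- orthogonality relations
  have hxx' : ∀ t, ⟪x t, deriv x t⟫ = 0 := by
    intro t
    have h1 : ∀ s, HasDerivAt (fun t => (⟪x t, x t⟫ : ℝ))
        (⟪x s, deriv x s⟫ + ⟪deriv x s, x s⟫) s := fun s => (hd s).inner ℝ (hd s)
    have h2 : (fun t => (⟪x t, x t⟫ : ℝ)) = fun _ => (1:ℝ) := by
      funext s; rw [real_inner_self_eq_norm_sq, hunit]; norm_num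
    have h3 : HasDerivAt (fun t => (⟪x t, x t⟫ : ℝ)) 0 t := by
      rw [h2]; exact hasDerivAt_const t 1
    have h4 := (h1 t).unique h3
    have h5 : (⟪x t, deriv x t⟫ : ℝ) = ⟪deriv x t, x t⟫ := real_inner_comm _ _
    linarith
  have hxx'' : ∀ t, ⟪x t, deriv (deriv x) t⟫ = -‖deriv x t‖^2 := by
    intro t
    have h1 : ∀ s, HasDerivAt (fun t => (⟪x t, deriv x t⟫ : ℝ))
        (⟪x s, deriv (deriv x) s⟫ + ⟪deriv x s, deriv x s⟫) s :=
      fun s => (hd s).inner ℝ (hd2 s)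
    have h2 : (fun t => (⟪x t, deriv x t⟫ : ℝ)) = fun _ => (0:ℝ) := by
      funext s; exact hxx' s
    have h3 : HasDerivAt (fun t => (⟪x t, deriv x t⟫ : ℝ)) 0 t := by
      rw [h2]; exact hasDerivAt_const t 0
    have h4 := (h1 t).unique h3
    rw [real_inner_self_eq_norm_sq] at h4
    linarith
  -- the covariant acceleration
  set A : ℝ → EuclideanSpace ℝ (Fin 3) := fun t => deriv (deriv x) t + ‖deriv x t‖^2 • x t
    with hA
  have hxA : ∀ t, ⟪x t, A t⟫ = 0 := by
    intro t
    rw [hA]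
    simp only
    rw [inner_add_right, real_inner_smul_right, hxx'', real_inner_self_eq_norm_sq, hunit]
    ring
  have heA : ∀ t, |(⟪e, A t⟫ : ℝ)| ≤ S * r₂ := by
    intro t
    have key : (⟪e, A t⟫ : ℝ) = ⟪e - (⟪e, x t⟫ : ℝ) • x t, A t⟫ := by
      rw [inner_sub_left, real_inner_smul_left, hxA]; ring
    have hn : ‖e - (⟪e, x t⟫ : ℝ) • x t‖^2 = 1 - ⟪e, x t⟫^2 := by
      rw [norm_sub_sq_real, real_inner_smul_right, norm_smul, he, hunit]
      rw [Real.norm_eq_abs, mul_one, sq_abs]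
      ring
    have hnorm : ‖e - (⟪e, x t⟫ : ℝ) • x t‖ = Real.sqrt (1 - ⟪e, x t⟫^2) := by
      rw [← hn, Real.sqrt_sq (norm_nonneg _)]
    rw [key]
    calc |(⟪e - (⟪e, x t⟫ : ℝ) • x t, A t⟫ : ℝ)|
        ≤ ‖e - (⟪e, x t⟫ : ℝ) • x t‖ * ‖A t‖ := abs_real_inner_le_norm _ _
      _ ≤ S * r₂ := by
          rw [hnorm]
          exact mul_le_mul (hSge t) (hr₂le t) (norm_nonneg _) hS0
  have hgpp_le : ∀ t, (⟪e, deriv (deriv x) t⟫ : ℝ) ≤ S*r₂ - lam * ‖deriv x t‖^2 := by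
    intro t
    have h1 : (⟪e, A t⟫ : ℝ) = ⟪e, deriv (deriv x) t⟫ + ‖deriv x t‖^2 * ⟪e, x t⟫ := by
      rw [hA]; simp only; rw [inner_add_right, real_inner_smul_right]
    have h2 := heA t
    have h3 := hlam_le t
    have h4 : lam * ‖deriv x t‖^2 ≤ ⟪e, x t⟫ * ‖deriv x t‖^2 :=
      mul_le_mul_of_nonneg_right h3 (sq_nonneg _)
    have h5 := abs_le.mp h2
    nlinarith [h5.2]
  -- derivatives of g
  have hg' : ∀ t, HasDerivAt (fun t => (⟪e, x t⟫ : ℝ)) ⟪e, deriv x t⟫ t := fun t => by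
    simpa using (hasDerivAt_const t e).inner ℝ (hd t)
  have hg'' : ∀ t, HasDerivAt (fun t => (⟪e, deriv x t⟫ : ℝ)) ⟪e, deriv (deriv x) t⟫ t := fun t => by
    simpa using (hasDerivAt_const t e).inner ℝ (hd2 t)
  have hg''cont : Continuous fun t => (⟪e, deriv (deriv x) t⟫ : ℝ) :=
    continuous_const.inner hx''c
  -- Lipschitz property of the speed
  have hlip : ∀ p q : ℝ, ‖deriv x p‖ ≤ ‖deriv x q‖ + r₂ * |p - q| := by
    intro p q
    refine le_of_forall_pos_le_add fun ε hε => ?_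
    have hqpos : ∀ t, 0 < (⟪deriv x t, deriv x t⟫ : ℝ) + ε^2 := fun t => by
      rw [real_inner_self_eq_norm_sq]; positivity
    set f : ℝ → ℝ := fun t => Real.sqrt (⟪deriv x t, deriv x t⟫ + ε^2) with hf
    have hfd : ∀ t, HasDerivAt f
        ((1/(2*Real.sqrt ((⟪deriv x t, deriv x t⟫ : ℝ) + ε^2))) *
          ((⟪deriv x t, deriv (deriv x) t⟫ : ℝ) + ⟪deriv (deriv x) t, deriv x t⟫)) t := by
      intro t
      have hv : HasDerivAt (fun t => (⟪deriv x t, deriv x t⟫ : ℝ) + ε^2)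
          ((⟪deriv x t, deriv (deriv x) t⟫ : ℝ) + ⟪deriv (deriv x) t, deriv x t⟫) t :=
        ((hd2 t).inner ℝ (hd2 t)).add_const _
      have := (Real.hasDerivAt_sqrt (ne_of_gt (hqpos t))).comp t hv
      simpa [hf, Function.comp_def] using this
    have hbound : ∀ t, ‖(1/(2*Real.sqrt ((⟪deriv x t, deriv x t⟫ : ℝ) + ε^2))) *
        ((⟪deriv x t, deriv (deriv x) t⟫ : ℝ) + ⟪deriv (deriv x) t, deriv x t⟫)‖ ≤ r₂ := by
      intro t
      have hsq : 0 < Real.sqrt ((⟪deriv x t, deriv x t⟫ : ℝ) + ε^2) :=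
        Real.sqrt_pos.mpr (hqpos t)
      have hle : ‖deriv x t‖ ≤ Real.sqrt ((⟪deriv x t, deriv x t⟫ : ℝ) + ε^2) := by
        rw [real_inner_self_eq_norm_sq]
        calc ‖deriv x t‖ = Real.sqrt (‖deriv x t‖^2) := (Real.sqrt_sq (norm_nonneg _)).symm
          _ ≤ _ := Real.sqrt_le_sqrt (by nlinarith [sq_nonneg ε])
      have hx'x : (⟪deriv x t, x t⟫ : ℝ) = 0 := by rw [real_inner_comm]; exact hxx' t
      have hinner : (⟪deriv x t, A t⟫ : ℝ) = ⟪deriv x t, deriv (deriv x) t⟫ := by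
        rw [hA]; simp only; rw [inner_add_right, real_inner_smul_right, hx'x]; ring
      have habs : |(⟪deriv x t, deriv (deriv x) t⟫ : ℝ)| ≤ ‖deriv x t‖ * r₂ := by
        rw [← hinner]
        calc |(⟪deriv x t, A t⟫ : ℝ)| ≤ ‖deriv x t‖ * ‖A t‖ := abs_real_inner_le_norm _ _
          _ ≤ ‖deriv x t‖ * r₂ := mul_le_mul_of_nonneg_left (hr₂le t) (norm_nonneg _)
      rw [Real.norm_eq_abs, abs_mul]
      have h1 : |1/(2*Real.sqrt ((⟪deriv x t, deriv x t⟫ : ℝ) + ε^2))|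
          = 1/(2*Real.sqrt ((⟪deriv x t, deriv x t⟫ : ℝ) + ε^2)) := abs_of_pos (by positivity)
      rw [h1]
      have h2 : |(⟪deriv x t, deriv (deriv x) t⟫ : ℝ) + ⟪deriv (deriv x) t, deriv x t⟫|
          ≤ 2 * (‖deriv x t‖ * r₂) := by
        have := real_inner_comm (deriv (deriv x) t) (deriv x t)
        calc |(⟪deriv x t, deriv (deriv x) t⟫ : ℝ) + ⟪deriv (deriv x) t, deriv x t⟫|
            = |2 * (⟪deriv x t, deriv (deriv x) t⟫ : ℝ)| := by rw [this]; ring_nf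
          _ = 2 * |(⟪deriv x t, deriv (deriv x) t⟫ : ℝ)| := by rw [abs_mul]; norm_num
          _ ≤ 2 * (‖deriv x t‖ * r₂) := by linarith [habs]
      rw [div_mul_eq_mul_div, one_mul, div_le_iff₀ (by positivity)]
      calc |(⟪deriv x t, deriv (deriv x) t⟫ : ℝ) + ⟪deriv (deriv x) t, deriv x t⟫|
          ≤ 2 * (‖deriv x t‖ * r₂) := h2
        _ ≤ 2 * (Real.sqrt ((⟪deriv x t, deriv x t⟫ : ℝ) + ε^2) * r₂) := by
            have := mul_le_mul_of_nonneg_right hle hr₂0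
            linarith
        _ = r₂ * (2*Real.sqrt ((⟪deriv x t, deriv x t⟫ : ℝ) + ε^2)) := by ring
    -- apply mean value inequality on univ
    have hmvt := Convex.norm_image_sub_le_of_norm_hasDerivWithin_le
      (f := f) (C := r₂) (s := Set.univ)
      (fun t _ => (hfd t).hasDerivWithinAt) (fun t _ => hbound t) convex_univ
      (Set.mem_univ q) (Set.mem_univ p)
    rw [Real.norm_eq_abs, Real.norm_eq_abs] at hmvt
    have hfp : ‖deriv x p‖ ≤ f p := by
      rw [hf]; simp only
      rw [real_inner_self_eq_norm_sq]
      calc ‖deriv x p‖ = Real.sqrt (‖deriv x p‖^2) := (Real.sqrt_sq (norm_nonneg _)).symm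
        _ ≤ _ := Real.sqrt_le_sqrt (by nlinarith [sq_nonneg ε])
    have hfq : f q ≤ ‖deriv x q‖ + ε := by
      rw [hf]; simp only
      rw [real_inner_self_eq_norm_sq]
      have := sqrt_add_sq_le (‖deriv x q‖^2) ε (by positivity) hε.le
      rwa [Real.sqrt_sq (norm_nonneg _)] at this
    have h6 := abs_le.mp hmvt
    have h7 : f p - f q ≤ r₂ * |p - q| := by linarith [h6.2]
    linarith
  -- key inequality
  have KI : ∀ t₀ T : ℝ, 0 ≤ T → r₂ * T ≤ ‖deriv x t₀‖ →
      -(2*S^2) ≤ 2*(S*r₂*T^2/2 - lam*((‖deriv x t₀‖ - r₂*T)^2*T^2/2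
        + 2*(‖deriv x t₀‖ - r₂*T)*r₂*T^3/3 + r₂^2*T^4/4)) := by
    intro t₀ T hT hrT
    set w₀ := ‖deriv x t₀‖ with hw₀
    set a := w₀ - r₂*T with ha
    have ha0 : 0 ≤ a := by rw [ha]; linarith
    have htp : ∫ s in (0:ℝ)..T, (T-s)*(⟪e, deriv (deriv x) (t₀+s)⟫ : ℝ)
        = ⟪e, x (t₀+T)⟫ - ⟪e, x t₀⟫ - T*⟪e, deriv x t₀⟫ :=
      taylor2 hg' hg'' hg''cont t₀ T
    have htm : ∫ s in (0:ℝ)..T, (T-s)*(⟪e, deriv (deriv x) (t₀-s)⟫ : ℝ)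
        = ⟪e, x (t₀-T)⟫ - ⟪e, x t₀⟫ + T*⟪e, deriv x t₀⟫ := by
      have haff : ∀ u : ℝ, HasDerivAt (fun u : ℝ => 2*t₀ - u) (-1) u := fun u => by
        simpa using (hasDerivAt_id u).const_sub (2*t₀)
      have hf1 : ∀ u, HasDerivAt (fun u => (⟪e, x (2*t₀-u)⟫ : ℝ))
          (-(⟪e, deriv x (2*t₀-u)⟫ : ℝ)) u := fun u => by
        have := (hg' (2*t₀-u)).comp u (haff u)
        simpa [Function.comp_def] using this
      have hf2 : ∀ u, HasDerivAt (fun u => -(⟪e, deriv x (2*t₀-u)⟫ : ℝ))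
          ((⟪e, deriv (deriv x) (2*t₀-u)⟫ : ℝ)) u := fun u => by
        have := ((hg'' (2*t₀-u)).comp u (haff u)).neg
        simpa [Function.comp_def, Pi.neg_def] using this
      have hfc : Continuous fun u : ℝ => (⟪e, deriv (deriv x) (2*t₀-u)⟫ : ℝ) :=
        continuous_const.inner (hx''c.comp (continuous_const.sub continuous_id))
      have h := taylor2 hf1 hf2 hfc t₀ T
      rw [show 2*t₀ - t₀ = t₀ by ring, show 2*t₀ - (t₀+T) = t₀ - T by ring] at h
      have heq2 : ∀ s : ℝ, 2*t₀-(t₀+s) = t₀ - s := fun s => by ring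
      simp only [heq2] at h
      rw [h]; ring
    have hcontp : Continuous fun s : ℝ => (T-s)*(⟪e, deriv (deriv x) (t₀+s)⟫ : ℝ) :=
      (continuous_const.sub continuous_id).mul
        (continuous_const.inner (hx''c.comp (continuous_const.add continuous_id)))
    have hcontm : Continuous fun s : ℝ => (T-s)*(⟪e, deriv (deriv x) (t₀-s)⟫ : ℝ) :=
      (continuous_const.sub continuous_id).mul
        (continuous_const.inner (hx''c.comp (continuous_const.sub continuous_id)))
    have hcontR : Continuous fun s : ℝ => (T-s)*(S*r₂ - lam*(a + r₂*(T-s))^2) := by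
      fun_prop
    have hptwise : ∀ σ : ℝ, ∀ s ∈ Set.Icc (0:ℝ) T, |σ| = 1 →
        (T-s)*(⟪e, deriv (deriv x) (t₀+σ*s)⟫ : ℝ) ≤ (T-s)*(S*r₂ - lam*(a + r₂*(T-s))^2) := by
      intro σ s hs hσ
      have hs0 := hs.1
      have hsT := hs.2
      have hw : a + r₂*(T-s) ≤ ‖deriv x (t₀+σ*s)‖ := by
        have hl := hlip t₀ (t₀+σ*s)
        have : |t₀ - (t₀+σ*s)| = s := by
          rw [show t₀ - (t₀+σ*s) = -(σ*s) by ring, abs_neg, abs_mul, hσ, one_mul,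
            abs_of_nonneg hs0]
        rw [this] at hl
        rw [ha]; linarith
      have hwnn : 0 ≤ a + r₂*(T-s) := by
        have : 0 ≤ r₂*(T-s) := mul_nonneg hr₂0 (by linarith)
        linarith
      have hsq : (a + r₂*(T-s))^2 ≤ ‖deriv x (t₀+σ*s)‖^2 := by
        nlinarith [norm_nonneg (deriv x (t₀+σ*s))]
      have h1 : (⟪e, deriv (deriv x) (t₀+σ*s)⟫ : ℝ) ≤ S*r₂ - lam*(a+r₂*(T-s))^2 := by
        have h0 := hgpp_le (t₀+σ*s)
        have h2 := mul_le_mul_of_nonneg_left hsq hlampos.le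
        linarith
      exact mul_le_mul_of_nonneg_left h1 (by linarith)
    have hbp : (⟪e, x (t₀+T)⟫ : ℝ) - ⟪e, x t₀⟫ - T*⟪e, deriv x t₀⟫
        ≤ S*r₂*T^2/2 - lam*(a^2*T^2/2 + 2*a*r₂*T^3/3 + r₂^2*T^4/4) := by
      rw [← htp, ← weight_integral T a r₂ lam (S*r₂)]
      apply intervalIntegral.integral_mono_on hT
        (hcontp.intervalIntegrable 0 T) (hcontR.intervalIntegrable 0 T)
      intro s hs
      have := hptwise 1 s hs (by norm_num)
      simpa using this
    have hbm : (⟪e, x (t₀-T)⟫ : ℝ) - ⟪e, x t₀⟫ + T*⟪e, deriv x t₀⟫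
        ≤ S*r₂*T^2/2 - lam*(a^2*T^2/2 + 2*a*r₂*T^3/3 + r₂^2*T^4/4) := by
      rw [← htm, ← weight_integral T a r₂ lam (S*r₂)]
      apply intervalIntegral.integral_mono_on hT
        (hcontm.intervalIntegrable 0 T) (hcontR.intervalIntegrable 0 T)
      intro s hs
      have := hptwise (-1) s hs (by norm_num)
      have heq : t₀ + (-1)*s = t₀ - s := by ring
      rw [heq] at this
      exact this
    have hgS : ∀ t, 1 - S^2 ≤ (⟪e, x t⟫ : ℝ) := by
      intro t
      have h1 : Real.sqrt (1 - ⟪e, x t⟫^2) ≤ S := hSge t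
      have h2 : (0:ℝ) ≤ 1 - ⟪e, x t⟫^2 := by nlinarith [hinner_le t, hlam_le t, hlampos]
      have h3 : 1 - (⟪e, x t⟫:ℝ)^2 ≤ S^2 := by
        nlinarith [Real.sq_sqrt h2, Real.sqrt_nonneg (1 - (⟪e, x t⟫:ℝ)^2)]
      nlinarith [hlam_le t, hlampos, hinner_le t]
    have hg1 : (⟪e, x t₀⟫ : ℝ) ≤ 1 := hinner_le t₀
    have hG1 := hgS (t₀+T)
    have hG2 := hgS (t₀-T)
    linarith
  have part1 : ∀ t : ℝ, ‖deriv x t‖^2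
      ≤ (2 * Real.cos (Real.pi / 9))^2 / lam * S * r₂ := by
    intro t₀
    rcases eq_or_lt_of_le (norm_nonneg (deriv x t₀)) with hw0 | hw0
    · rw [← hw0]
      have : (0:ℝ)^2 = 0 := by norm_num
      rw [this]
      exact mul_nonneg (mul_nonneg hC2nn hS0) hr₂0
    · rcases eq_or_lt_of_le hr₂0 with hr0 | hr0
      · exfalso
        set w₀ := ‖deriv x t₀‖ with hw₀
        set T : ℝ := 2*S^2/(lam*w₀^2) + 1 with hT
        have hT1 : (1:ℝ) ≤ T := by
          rw [hT]
          have : 0 ≤ 2*S^2/(lam*w₀^2) := by positivity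
          linarith
        have hT0 : (0:ℝ) ≤ T := by linarith
        have hKI := KI t₀ T hT0 (by rw [← hr0]; simpa using hw0.le)
        rw [← hr0] at hKI
        have hTval : lam*w₀^2*T = 2*S^2 + lam*w₀^2 := by
          rw [hT]
          field_simp
        have hT2 : lam*w₀^2*T ≤ lam*w₀^2*T^2 := by
          have h0 : 0 ≤ lam*w₀^2*T := by positivity
          nlinarith
        rw [← hw₀] at hKI
        clear_value w₀ T
        nlinarith [hKI, hTval, hT2, mul_pos hlampos (pow_pos hw0 2)]
      · set w₀ := ‖deriv x t₀‖ with hw₀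
        have hr0' : r₂ ≠ 0 := ne_of_gt hr0
        have hKI := KI t₀ (w₀/r₂) (by positivity) (by rw [mul_div_cancel₀ _ hr0'])
        have haz : w₀ - r₂*(w₀/r₂) = 0 := by field_simp; ring
        rw [haz] at hKI
        have hTv : (w₀/r₂)^2 = w₀^2/r₂^2 := div_pow _ _ _
        have hTv4 : (w₀/r₂)^4 = w₀^4/r₂^4 := div_pow _ _ _
        have key : lam * (w₀^2)^2 ≤ 2*(S*r₂)*(w₀^2) + 4*(S*r₂)^2 := by
          rw [hTv, hTv4] at hKI
          have hr2 : (0:ℝ) < r₂^2 := by positivity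
          have hr4 : (0:ℝ) < r₂^4 := by positivity
          have h5 : -(2*S^2) ≤ 2*(S*r₂*(w₀^2/r₂^2)/2 - lam*(r₂^2*(w₀^4/r₂^4)/4)) := by
            have hsimp : 2*(S*r₂*(w₀^2/r₂^2)/2 - lam*((0:ℝ)^2*(w₀^2/r₂^2)/2
                + 2*0*r₂*(w₀/r₂)^3/3 + r₂^2*(w₀^4/r₂^4)/4))
                = 2*(S*r₂*(w₀^2/r₂^2)/2 - lam*(r₂^2*(w₀^4/r₂^4)/4)) := by ring
            rw [← hsimp]
            exact hKI
          have h6 : S*r₂*(w₀^2/r₂^2) = S*w₀^2/r₂ := by field_simp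
          have h7 : r₂^2*(w₀^4/r₂^4) = w₀^4/r₂^2 := by field_simp
          rw [h6, h7] at h5
          -- h5 : -(2S²) ≤ 2*(S*w₀²/r₂/2 - lam*(w₀⁴/r₂²/4))
          have h8 := mul_le_mul_of_nonneg_left h5 (le_of_lt hr2)
          have h9 : r₂^2 * (2*(S*w₀^2/r₂/2 - lam*(w₀^4/r₂^2/4)))
              = S*r₂*w₀^2 - lam*w₀^4/2 := by field_simp; ring
          rw [h9] at h8
          nlinarith [h8, sq_nonneg (S*r₂)]
        have hq := quad_bound lam (S*r₂) (w₀^2) hlampos hlam1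
          (mul_nonneg hS0 hr₂0) (sq_nonneg _) key
        calc w₀^2 ≤ (2*Real.cos (Real.pi/9))^2/lam * (S*r₂) := hq
          _ = (2*Real.cos (Real.pi/9))^2/lam * S * r₂ := by ring
  refine ⟨part1, ?_⟩
  have hSle : S ≤ Real.sqrt (1 - lam^2) := by
    rw [hSdef]
    apply ciSup_le
    intro t
    apply Real.sqrt_le_sqrt
    have h1 := hlam_le t
    have h2 := hinner_le t
    nlinarith [hlampos]
  calc (2*Real.cos (Real.pi/9))^2/lam * S * r₂
      ≤ (2*Real.cos (Real.pi/9))^2/lam * Real.sqrt (1-lam^2) * r₂ :=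
        mul_le_mul_of_nonneg_right (mul_le_mul_of_nonneg_left hSle hC2nn) hr₂0
    _ = (2*Real.cos (Real.pi/9))^2 * Real.sqrt (1-lam^2)/lam * r₂ := by ring
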